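/- For all x > 0, g(x+1) - g(x) = 921600 / (x(x+1)(2x+1)^2 (1008x^4 + 1960x^2 + 407)(1008x^4 + 4032x^3 + 8008x^2 + 7952x + 3375)), where g(x) = ψ'(x + 1/2) - (1/x)·(x^4 + (67/36)x^2 + 256/945)/(x^4 + (35/18)x^2 + 407/1008). -/

import Mathlib

open Real Set Filter

lemma analyticOnNhd_realGamma : AnalyticOnNhd ℝ Real.Gamma (Set.Ioi 0) := by
  intro x hx
  have hx : (0:ℝ) < x := hx
  have hU : IsOpen {s : ℂ | 0 < s.re} := isOpen_lt continuous_const Complex.continuous_re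
  have hd : DifferentiableOn ℂ Complex.Gamma {s : ℂ | 0 < s.re} := by
    intro s hs
    refine (Complex.differentiableAt_Gamma s fun m => ?_).differentiableWithinAt
    intro h
    rw [h] at hs
    simp only [Set.mem_setOf_eq, Complex.neg_re, Complex.natCast_re] at hs
    have : (0:ℝ) ≤ m := Nat.cast_nonneg m; linarith
  have hA : AnalyticAt ℂ Complex.Gamma (x : ℂ) :=
    (hd.analyticOnNhd hU) _ (by simpa using hx)
  have h2 : AnalyticAt ℝ (fun y : ℝ => (Complex.Gamma (y : ℂ)).re) x :=
    (Complex.reCLM.analyticAt _).comp ((hA.restrictScalars).comp (Complex.ofRealCLM.analyticAt x))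
  refine h2.congr (Filter.Eventually.of_forall fun y => ?_)
  simp only []; rw [Complex.Gamma_ofReal, Complex.ofReal_re]

lemma gamma_ne_neg {y : ℝ} (hy : 0 < y) : ∀ m : ℕ, y ≠ -m := by
  intro m h
  have : (0:ℝ) ≤ m := Nat.cast_nonneg m
  rw [h] at hy; linarith

lemma diffAt_logGamma {y : ℝ} (hy : 0 < y) :
    DifferentiableAt ℝ (fun t : ℝ => Real.log (Real.Gamma t)) y :=
  (Real.differentiableAt_Gamma (gamma_ne_neg hy)).log (Real.Gamma_pos_of_pos hy).ne'

lemma deriv_logGamma {y : ℝ} (hy : 0 < y) :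
    deriv (fun t : ℝ => Real.log (Real.Gamma t)) y = deriv Real.Gamma y / Real.Gamma y :=
  ((Real.differentiableAt_Gamma (gamma_ne_neg hy)).hasDerivAt.log
    (Real.Gamma_pos_of_pos hy).ne').deriv

lemma digamma_rec {y : ℝ} (hy : 0 < y) :
    deriv (fun t : ℝ => Real.log (Real.Gamma t)) (y + 1) =
      y⁻¹ + deriv (fun t : ℝ => Real.log (Real.Gamma t)) y := by
  set L := fun t : ℝ => Real.log (Real.Gamma t) with hL
  have hev : (fun t => L (t + 1)) =ᶠ[nhds y] fun t => Real.log t + L t := by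
    filter_upwards [IsOpen.mem_nhds isOpen_Ioi hy] with t ht
    have ht : (0:ℝ) < t := ht
    simp only [hL]
    rw [Real.Gamma_add_one ht.ne', Real.log_mul ht.ne' (Real.Gamma_pos_of_pos ht).ne']
  have h1 : deriv (fun t => L (t + 1)) y = deriv L (y + 1) := deriv_comp_add_const L 1 y
  rw [← h1, hev.deriv_eq, deriv_fun_add (Real.differentiableAt_log hy.ne') (diffAt_logGamma hy),
    Real.deriv_log]

lemma psi_diffAt {y : ℝ} (hy : 0 < y) :
    DifferentiableAt ℝ (deriv (fun t : ℝ => Real.log (Real.Gamma t))) y := by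
  have hev : deriv (fun t : ℝ => Real.log (Real.Gamma t)) =ᶠ[nhds y]
      fun t => deriv Real.Gamma t / Real.Gamma t := by
    filter_upwards [IsOpen.mem_nhds isOpen_Ioi hy] with t ht
    exact deriv_logGamma ht
  have hd : DifferentiableAt ℝ (fun t => deriv Real.Gamma t / Real.Gamma t) y :=
    ((analyticOnNhd_realGamma.deriv y hy).differentiableAt).div
      (Real.differentiableAt_Gamma (gamma_ne_neg hy)) (Real.Gamma_pos_of_pos hy).ne'
  exact hev.differentiableAt_iff.mpr hd

/-- The trigamma function, the second derivative of `log ∘ Γ`. -/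
noncomputable def trigamma (x : ℝ) : ℝ :=
  deriv (deriv (fun y : ℝ => Real.log (Real.Gamma y))) x

lemma trigamma_rec {y : ℝ} (hy : 0 < y) :
    trigamma (y + 1) = trigamma y - 1 / y ^ 2 := by
  set L := fun t : ℝ => Real.log (Real.Gamma t) with hL
  have hev : (fun t => deriv L (t + 1)) =ᶠ[nhds y] fun t => t⁻¹ + deriv L t := by
    filter_upwards [IsOpen.mem_nhds isOpen_Ioi hy] with t ht
    exact digamma_rec ht
  have h1 : deriv (fun t => deriv L (t + 1)) y = deriv (deriv L) (y + 1) :=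
    deriv_comp_add_const (deriv L) 1 y
  have : trigamma (y + 1) = deriv (fun t => t⁻¹ + deriv L t) y := by
    rw [trigamma, ← h1, hev.deriv_eq]
  rw [this, deriv_fun_add (differentiableAt_inv hy.ne') (psi_diffAt hy), deriv_inv, trigamma]
  field_simp
  ring

theorem g_diff_eq (g : ℝ → ℝ)
    (hg : ∀ x : ℝ, g x = trigamma (x + 1 / 2) -
      (1 / x) * (x ^ 4 + (67 / 36) * x ^ 2 + 256 / 945) /
        (x ^ 4 + (35 / 18) * x ^ 2 + 407 / 1008))
    (x : ℝ) (hx : 0 < x) :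
    g (x + 1) - g x =
      921600 / (x * (x + 1) * (2 * x + 1) ^ 2 *
        (1008 * x ^ 4 + 1960 * x ^ 2 + 407) *
        (1008 * x ^ 4 + 4032 * x ^ 3 + 8008 * x ^ 2 + 7952 * x + 3375)) := by
  have hy : (0:ℝ) < x + 1 / 2 := by linarith
  have key : trigamma (x + 1 + 1 / 2) = trigamma (x + 1 / 2) - 1 / (x + 1 / 2) ^ 2 := by
    have : x + 1 + 1 / 2 = (x + 1 / 2) + 1 := by ring
    rw [this, trigamma_rec hy]
  rw [hg (x + 1), hg x, key]
  have h1 : x ≠ 0 := hx.ne'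
  have h2 : x + 1 ≠ 0 := by positivity
  have h3 : x + 1 / 2 ≠ 0 := hy.ne'
  have h4 : x ^ 4 + 35 / 18 * x ^ 2 + 407 / 1008 ≠ 0 := by positivity
  have h5 : (x + 1) ^ 4 + 35 / 18 * (x + 1) ^ 2 + 407 / 1008 ≠ 0 := by positivity
  have h6 : 1008 * x ^ 4 + 1960 * x ^ 2 + 407 ≠ 0 := by positivity
  have h7 : 1008 * x ^ 4 + 4032 * x ^ 3 + 8008 * x ^ 2 + 7952 * x + 3375 ≠ 0 := by positivity
  have h8 : 2 * x + 1 ≠ 0 := by positivity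
  field_simp
  ring
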